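/- For every δ > 0 let F(δ) := sup_{r ≥ 0} r e^{-r²}(e^{(2r+δ)δ} - 1). Then F(δ) → 0 as δ → 0⁺; equivalently, for every ε > 0 there is δ₀ > 0 such that for all 0 < δ < δ₀ and all r ≥ 0, r e^{-r²}(e^{(2r+δ)δ} - 1) < ε. -/

import Mathlib

open Filter Topology

theorem key19 (ε : ℝ) (hε : 0 < ε) : ∃ δ₀ : ℝ, 0 < δ₀ ∧ ∀ δ : ℝ, 0 < δ → δ < δ₀ →
    ∀ r : ℝ, 0 ≤ r →
      r * Real.exp (-r ^ 2) * (Real.exp ((2 * r + δ) * δ) - 1) < ε := by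
  set R : ℝ := 2 + 16 / ε with hRdef
  clear_value R
  have hRpos : 0 < R := by rw [hRdef]; positivity
  have hεR : 0 < ε / R := by positivity
  have hlog : 0 < Real.log (1 + ε / R) := Real.log_pos (by linarith)
  refine ⟨min 1 (Real.log (1 + ε / R) / (2 * R + 1)), by positivity, ?_⟩
  intro δ hδ hδlt r hr
  have hδ1 : δ < 1 := lt_of_lt_of_le hδlt (min_le_left _ _)
  have hδ2 : δ * (2 * R + 1) < Real.log (1 + ε / R) := by
    have h := lt_of_lt_of_le hδlt (min_le_right _ _)
    exact (lt_div_iff₀ (by positivity)).1 h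
  rcases le_or_gt r R with hcase | hcase
  · have hB2 : Real.exp ((2 * r + δ) * δ) < 1 + ε / R := by
      calc Real.exp ((2 * r + δ) * δ) < Real.exp (Real.log (1 + ε / R)) := by
            apply Real.exp_lt_exp.2
            have hδδ : δ * δ < δ := by nlinarith
            have hrδ : r * δ ≤ R * δ := mul_le_mul_of_nonneg_right hcase hδ.le
            nlinarith [hδδ, hrδ]
        _ = 1 + ε / R := Real.exp_log (by positivity)
    have h1 : r * Real.exp (-r ^ 2) ≤ R := by
      have he : Real.exp (-r ^ 2) ≤ 1 := Real.exp_le_one_iff.2 (by nlinarith)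
      nlinarith [Real.exp_pos (-r ^ 2)]
    have h2 : (0:ℝ) ≤ Real.exp ((2 * r + δ) * δ) - 1 := by
      have : (1:ℝ) ≤ Real.exp ((2 * r + δ) * δ) := Real.one_le_exp (by positivity)
      linarith
    calc r * Real.exp (-r ^ 2) * (Real.exp ((2 * r + δ) * δ) - 1)
        ≤ R * (Real.exp ((2 * r + δ) * δ) - 1) := mul_le_mul_of_nonneg_right h1 h2
      _ < R * (ε / R) := by apply mul_lt_mul_of_pos_left (by linarith) hRpos
      _ = ε := by field_simp
  · have h16 : (0:ℝ) < 16 / ε := by positivity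
    have hr1 : 1 + 16 / ε < r - 1 := by simp only [hRdef] at hcase; linarith
    have hrpos : (0:ℝ) < r := by linarith
    have hE1 : r * Real.exp (-r ^ 2) * (Real.exp ((2 * r + δ) * δ) - 1)
        ≤ r * Real.exp ((2 * r + δ) * δ - r ^ 2) := by
      rw [Real.exp_sub, Real.exp_neg]
      have hp := Real.exp_pos ((2 * r + δ) * δ)
      have hq := Real.exp_pos (r ^ 2)
      rw [div_eq_mul_inv]
      ring_nf
      nlinarith [mul_pos hrpos (inv_pos.2 hq)]
    have hE2 : Real.exp ((2 * r + δ) * δ - r ^ 2) ≤ Real.exp (2 - (r - 1) ^ 2) := by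
      apply Real.exp_le_exp.2; nlinarith
    have hE3 : Real.exp (2 - (r - 1) ^ 2) ≤ Real.exp 2 / (r - 1) ^ 2 := by
      rw [Real.exp_sub]
      apply div_le_div_of_nonneg_left (Real.exp_pos 2).le (by nlinarith)
      nlinarith [Real.add_one_le_exp ((r - 1) ^ 2)]
    have he2 : Real.exp 2 < 8 := by
      have h := Real.exp_one_lt_d9
      calc Real.exp 2 = Real.exp 1 * Real.exp 1 := by rw [← Real.exp_add]; norm_num
        _ < 8 := by nlinarith [Real.exp_pos 1]
    have hfin : r * (Real.exp 2 / (r - 1) ^ 2) < ε := by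
      have ht : (0:ℝ) < r - 1 := by linarith
      have h16ε : ε * (16 / ε) = 16 := by field_simp
      rw [mul_div_assoc', div_lt_iff₀ (by positivity)]
      nlinarith [mul_lt_mul_of_pos_left hr1 (mul_pos hε ht), mul_pos hε ht]
    calc r * Real.exp (-r ^ 2) * (Real.exp ((2 * r + δ) * δ) - 1)
        ≤ r * Real.exp ((2 * r + δ) * δ - r ^ 2) := hE1
      _ ≤ r * Real.exp (2 - (r - 1) ^ 2) := mul_le_mul_of_nonneg_left hE2 hr
      _ ≤ r * (Real.exp 2 / (r - 1) ^ 2) := mul_le_mul_of_nonneg_left hE3 hr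
      _ < ε := hfin

/-- For `F(δ) := sup_{r ≥ 0} r e^{-r²}(e^{(2r+δ)δ} - 1)`, one has `F(δ) → 0` as
`δ → 0⁺`; equivalently, for every `ε > 0` there is `δ₀ > 0` such that for all
`0 < δ < δ₀` and all `r ≥ 0`, `r e^{-r²}(e^{(2r+δ)δ} - 1) < ε`. -/
theorem stmt19 :
    Filter.Tendsto
      (fun δ : ℝ => ⨆ r : {t : ℝ // 0 ≤ t},
        (r : ℝ) * Real.exp (-(r : ℝ) ^ 2) * (Real.exp ((2 * (r : ℝ) + δ) * δ) - 1))
      (nhdsWithin 0 (Set.Ioi 0)) (nhds 0) ∧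
    ∀ ε : ℝ, 0 < ε → ∃ δ₀ : ℝ, 0 < δ₀ ∧ ∀ δ : ℝ, 0 < δ → δ < δ₀ →
      ∀ r : ℝ, 0 ≤ r →
        r * Real.exp (-r ^ 2) * (Real.exp ((2 * r + δ) * δ) - 1) < ε := by
  refine ⟨?_, key19⟩
  rw [Metric.tendsto_nhds]
  intro ε hε
  obtain ⟨δ₀, hδ₀, hkey⟩ := key19 (ε / 2) (by linarith)
  filter_upwards [Ioo_mem_nhdsGT_of_mem ⟨le_refl 0, hδ₀⟩] with δ hδ
  have h := hkey δ hδ.1 hδ.2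
  set f : {t : ℝ // 0 ≤ t} → ℝ := fun r =>
    (r : ℝ) * Real.exp (-(r : ℝ) ^ 2) * (Real.exp ((2 * (r : ℝ) + δ) * δ) - 1) with hf
  have hbdd : BddAbove (Set.range f) := by
    refine ⟨ε / 2, ?_⟩
    rintro x ⟨r, rfl⟩
    exact (h r r.2).le
  have hub : (⨆ r : {t : ℝ // 0 ≤ t}, f r) ≤ ε / 2 := ciSup_le fun r => (h r r.2).le
  have hlb : 0 ≤ ⨆ r : {t : ℝ // 0 ≤ t}, f r := by
    have h0 : f ⟨0, le_refl 0⟩ = 0 := by simp [hf]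
    have := le_ciSup hbdd (⟨0, le_refl 0⟩ : {t : ℝ // 0 ≤ t})
    linarith [this.trans_eq' h0]
  rw [Real.dist_eq, sub_zero, abs_of_nonneg hlb]
  linarith
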